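/- arXiv:0707.3539 — 2 statements merged into one kernel-verified Lean document; each statement's English description precedes it below -/
import Mathlib

section
/- Every ℂ-linear map D : M_n(ℂ) → M_n(ℂ) that is a derivation of the associative matrix product (D(AB) = D(A)B + A D(B) for all A, B) and is compatible with the adjoint (D(Aᴴ) = D(A)ᴴ for all A) is of the form D(A) = i(HA − AH) for some Hermitian matrix H; that is, the linear equations of motion preserving both the Jordan and Lie products on observables are exactly the infinitesimal generators of unitary transformations. -/
open Matrix

/-- Every ℂ-linear `*`-derivation of the matrix algebra `M_n(ℂ)` (a derivation
of the associative product compatible with the conjugate transpose) is inner of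
the form `D(A) = i(HA − AH)` for some Hermitian matrix `H`: the linear
equations of motion preserving both the Jordan and Lie products of observables
are exactly the infinitesimal generators of unitary transformations. -/
theorem star_derivation_is_inner_hermitian {n : Type*} [Fintype n] [DecidableEq n]
    (D : Matrix n n ℂ →ₗ[ℂ] Matrix n n ℂ)
    (hder : ∀ A B : Matrix n n ℂ, D (A * B) = D A * B + A * D B)
    (hstar : ∀ A : Matrix n n ℂ, D Aᴴ = (D A)ᴴ) :
    ∃ H : Matrix n n ℂ, H.IsHermitian ∧
      ∀ A : Matrix n n ℂ, D A = Complex.I • (H * A - A * H) := by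
  rcases isEmpty_or_nonempty n with h | h
  · refine ⟨0, isHermitian_zero, fun A => ?_⟩
    have : Subsingleton (Matrix n n ℂ) :=
      ⟨fun a b => by ext i j; exact (IsEmpty.false i).elim⟩
    exact Subsingleton.elim _ _
  obtain ⟨i0⟩ := h
  set M : Matrix n n ℂ := ∑ k, D (Matrix.single k i0 1) * Matrix.single i0 k 1 with hM
  have hsum1 : ∑ k : n, Matrix.single k i0 (1:ℂ) * Matrix.single i0 k 1 = 1 := by
    have he : ∀ k : n, Matrix.single k i0 (1:ℂ) * Matrix.single i0 k 1
        = Matrix.single k k (1 : ℂ) := by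
      intro k; rw [single_mul_single_same, one_mul]
    rw [Finset.sum_congr rfl fun k _ => he k]
    ext i j
    simp only [Matrix.sum_apply, Matrix.one_apply, Matrix.single, of_apply]
    by_cases hij : i = j
    · subst hij
      rw [Finset.sum_eq_single i]
      · simp
      · intro k _ hk; simp [hk]
      · simp
    · rw [if_neg hij, Finset.sum_eq_zero]
      intro k _
      by_cases hk : k = i
      · subst hk; simp [hij]
      · simp [hk]
  have hbasis : ∀ i j : n, D (Matrix.single i j 1) =
      M * Matrix.single i j 1 - Matrix.single i j 1 * M := by
    intro i j
    have h1 : M * Matrix.single i j 1 = D (Matrix.single i i0 1) * Matrix.single i0 j 1 := by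
      rw [hM, Finset.sum_mul, Finset.sum_eq_single i]
      · rw [mul_assoc, single_mul_single_same, one_mul]
      · intro k _ hk
        rw [mul_assoc, single_mul_single_of_ne (h := hk), mul_zero]
      · simp
    have h2 : Matrix.single i j 1 * M
        = D (Matrix.single i i0 1) * Matrix.single i0 j 1 - D (Matrix.single i j 1) := by
      have hterm : ∀ k : n, Matrix.single i j 1 * (D (Matrix.single k i0 1) * Matrix.single i0 k 1)
          = D (Matrix.single i j 1 * Matrix.single k i0 1) * Matrix.single i0 k 1
            - D (Matrix.single i j 1) * (Matrix.single k i0 1 * Matrix.single i0 k 1) := by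
        intro k
        have h3 : Matrix.single i j (1:ℂ) * D (Matrix.single k i0 1)
            = D (Matrix.single i j 1 * Matrix.single k i0 1)
              - D (Matrix.single i j 1) * Matrix.single k i0 1 := by
          rw [hder]; abel
        rw [← mul_assoc, h3, sub_mul, mul_assoc]
      rw [hM, Finset.mul_sum, Finset.sum_congr rfl fun k _ => hterm k,
        Finset.sum_sub_distrib, ← Finset.mul_sum, hsum1, mul_one]
      congr 1
      rw [Finset.sum_eq_single j]
      · rw [single_mul_single_same, one_mul]
      · intro k _ hk
        rw [single_mul_single_of_ne (h := Ne.symm hk)]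
        rw [map_zero, zero_mul]
      · simp
    rw [h1, h2]; abel
  have hDA : ∀ A, D A = M * A - A * M := by
    intro A
    induction A using Matrix.induction_on' with
    | h_zero => simp
    | h_add A B hA hB => rw [map_add, hA, hB]; noncomm_ring
    | h_std_basis i j x =>
        have hx : Matrix.single i j x = x • Matrix.single i j (1:ℂ) := by
          rw [smul_single, smul_eq_mul, mul_one]
        rw [hx, D.map_smul, hbasis i j, mul_smul_comm, smul_mul_assoc, smul_sub]
  have hcomm : ∀ A : Matrix n n ℂ, Mᴴ * A - A * Mᴴ = A * M - M * A := by
    have key : ∀ A : Matrix n n ℂ, M * Aᴴ + Mᴴ * Aᴴ = Aᴴ * Mᴴ + Aᴴ * M := by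
      intro A
      have h1 := hstar A
      rw [hDA A, hDA Aᴴ, conjTranspose_sub, conjTranspose_mul, conjTranspose_mul] at h1
      exact sub_eq_sub_iff_add_eq_add.mp h1
    intro A
    have h2 := key Aᴴ
    rw [conjTranspose_conjTranspose] at h2
    rw [sub_eq_sub_iff_add_eq_add, add_comm (Mᴴ * A), add_comm (A * M)]
    exact h2
  refine ⟨(-(Complex.I)/2) • (M - Mᴴ), ?_, ?_⟩
  · rw [IsHermitian, conjTranspose_smul, conjTranspose_sub, conjTranspose_conjTranspose]
    have hs : star (-(Complex.I)/2) = Complex.I/2 := by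
      simp [Complex.ext_iff]
    rw [hs, neg_div, neg_smul, ← smul_neg, neg_sub]
  · intro A
    have h2 := hcomm A
    have h4 : Mᴴ * A = A * Mᴴ + (A * M - M * A) := by rw [← h2]; abel
    have h3 : (M - Mᴴ) * A - A * (M - Mᴴ) = (2:ℂ) • (M * A - A * M) := by
      rw [sub_mul, mul_sub, h4, two_smul]; abel
    rw [hDA A, smul_mul_assoc, mul_smul_comm, ← smul_sub, h3, smul_smul, smul_smul]
    have hc : Complex.I * (-(Complex.I)/2) * 2 = 1 := by
      linear_combination (-1 : ℂ) * Complex.I_mul_I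
    rw [hc, one_smul]
end

section
/- Let ħ > 0 and let ψ : ℝ → ℂ be a Schwartz function. Define the Wigner function W(q,p) = (1/(2πħ)) ∫_ℝ e^{ipx/ħ} ψ(q − x/2)·conj(ψ(q + x/2)) dx. Then for every q ∈ ℝ the function p ↦ W(q,p) is integrable and the marginal property holds: ∫_ℝ W(q,p) dp = |ψ(q)|². -/
open MeasureTheory

/-- The Wigner function of a state `ψ`:
`W(q,p) = (1/(2πħ)) ∫ e^{ipx/ħ} ψ(q − x/2)·conj(ψ(q + x/2)) dx`. -/
noncomputable def wigner (hbar : ℝ) (ψ : ℝ → ℂ) (q p : ℝ) : ℂ :=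
  (((2 * Real.pi * hbar : ℝ) : ℂ))⁻¹ *
    ∫ x : ℝ, Complex.exp (Complex.I * (p : ℂ) * (x : ℂ) / (hbar : ℂ)) *
      (ψ (q - x / 2) * (starRingEnd ℂ) (ψ (q + x / 2)))

open Real FourierTransform SchwartzMap in
lemma schwartzMap_hasTemperateGrowth (f : SchwartzMap ℝ ℂ) :
    Function.HasTemperateGrowth f := by
  refine ⟨f.smooth', fun n => ⟨0, SchwartzMap.seminorm ℝ 0 n f, fun x => ?_⟩⟩
  simpa using f.norm_iteratedFDeriv_le_seminorm ℝ n x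

lemma hasTemperateGrowth_affine (a c : ℝ) :
    Function.HasTemperateGrowth (fun x : ℝ => a + c * x) := by
  have hfd : (fun x : ℝ => a + c * x) =
      fun x : ℝ => a + (c • ContinuousLinearMap.id ℝ ℝ) x := by
    ext x; simp [smul_eq_mul]
  refine Function.HasTemperateGrowth.of_fderiv (k := 1) (C := |a| + |c|) ?_ ?_ fun x => ?_
  · have : fderiv ℝ (fun x : ℝ => a + c * x) =
        fun _ : ℝ => (c • ContinuousLinearMap.id ℝ ℝ) := by
      funext x
      rw [hfd, fderiv_const_add, ContinuousLinearMap.fderiv]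
    rw [this]
    exact Function.HasTemperateGrowth.const _
  · rw [hfd]; exact (differentiable_const a).add (c • ContinuousLinearMap.id ℝ ℝ).differentiable
  · have : ‖a + c * x‖ ≤ |a| + |c| * ‖x‖ := by
      calc ‖a + c * x‖ ≤ |a| + ‖c * x‖ := norm_add_le _ _
      _ = |a| + |c| * ‖x‖ := by rw [norm_mul]; rfl
    calc ‖a + c * x‖ ≤ |a| + |c| * ‖x‖ := this
    _ ≤ (|a| + |c|) * (1 + ‖x‖) ^ 1 := by
        have h0 : (0:ℝ) ≤ ‖x‖ := norm_nonneg x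
        nlinarith [abs_nonneg a, abs_nonneg c]

lemma affine_upper (a c : ℝ) (hc : c ≠ 0) :
    ∃ (k : ℕ) (C : ℝ), ∀ x : ℝ, ‖x‖ ≤ C * (1 + ‖a + c * x‖) ^ k := by
  refine ⟨1, (|a| + 1) / |c|, fun x => ?_⟩
  have hc' : (0:ℝ) < |c| := abs_pos.2 hc
  have hx : |c| * ‖x‖ = ‖c * x‖ := (norm_mul c x).symm
  have h1 : ‖c * x‖ ≤ |a| + ‖a + c * x‖ := by
    calc ‖c * x‖ = ‖(a + c * x) - a‖ := by ring_nf
    _ ≤ ‖a + c * x‖ + ‖a‖ := norm_sub_le _ _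
    _ = |a| + ‖a + c * x‖ := by rw [add_comm]; rfl
  rw [div_mul_eq_mul_div, le_div_iff₀ hc', pow_one]
  have h0 : (0:ℝ) ≤ ‖a + c * x‖ := norm_nonneg _
  nlinarith [abs_nonneg a, norm_nonneg x]

open Real FourierTransform SchwartzMap in
/-- Marginal property of the Wigner function of a Schwartz state: for each `q`
the function `p ↦ W(q,p)` is integrable and `∫ W(q,p) dp = |ψ(q)|²`. -/
theorem wigner_marginal (hbar : ℝ) (hhbar : 0 < hbar) (ψ : SchwartzMap ℝ ℂ)
    (q : ℝ) :
    Integrable (fun p : ℝ => wigner hbar (fun x => ψ x) q p) ∧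
    ∫ p : ℝ, wigner hbar (fun x => ψ x) q p = ((‖ψ q‖) ^ 2 : ℝ) := by
  classical
  -- build the Schwartz function h x = ψ(q - x/2) * conj (ψ (q + x/2))
  have hπ : Real.pi ≠ 0 := Real.pi_ne_zero
  have hhb : hbar ≠ 0 := ne_of_gt hhbar
  set ψ₁ : SchwartzMap ℝ ℂ :=
    SchwartzMap.compCLM (𝕜 := ℝ) (hasTemperateGrowth_affine q (-2⁻¹))
      (affine_upper q (-2⁻¹) (by norm_num)) ψ with hψ₁
  set ψ₂ : SchwartzMap ℝ ℂ :=
    SchwartzMap.compCLM (𝕜 := ℝ) (hasTemperateGrowth_affine q 2⁻¹)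
      (affine_upper q 2⁻¹ (by norm_num)) ψ with hψ₂
  set conjL : ℂ →L[ℝ] ℂ := Complex.conjCLE.toContinuousLinearMap with hconjL
  set B : ℂ →L[ℝ] ℂ →L[ℝ] ℂ :=
    ((ContinuousLinearMap.mul ℝ ℂ).flip.comp conjL).flip with hB
  have hBapp : ∀ u v : ℂ, B u v = u * (starRingEnd ℂ) v := by
    intro u v; simp [hB, hconjL, mul_comm]
  set h : SchwartzMap ℝ ℂ :=
    SchwartzMap.bilinLeftCLM B (schwartzMap_hasTemperateGrowth ψ₂) ψ₁ with hh
  have hfun : ∀ x : ℝ, h x = ψ (q - x / 2) * (starRingEnd ℂ) (ψ (q + x / 2)) := by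
    intro x
    have e1 : q + -2⁻¹ * x = q - x / 2 := by ring
    have e2 : q + 2⁻¹ * x = q + x / 2 := by ring
    show B (ψ₁ x) (ψ₂ x) = _
    rw [hBapp]
    show ψ (q + -2⁻¹ * x) * (starRingEnd ℂ) (ψ (q + 2⁻¹ * x)) = _
    rw [e1, e2]
  -- the Wigner function as a rescaled Fourier transform of h
  have key : ∀ p : ℝ, wigner hbar (fun x => ψ x) q p
      = ((2 * Real.pi * hbar : ℝ) : ℂ)⁻¹ * 𝓕 (⇑h) (-(2 * Real.pi * hbar)⁻¹ * p) := by
    intro p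
    unfold wigner
    congr 1
    rw [Real.fourier_eq']
    refine integral_congr_ae (Filter.Eventually.of_forall fun x => ?_)
    simp only [smul_eq_mul]
    rw [hfun x]
    congr 1
    have hinner : (inner ℝ x (-(2 * Real.pi * hbar)⁻¹ * p) : ℝ)
        = x * (-(2 * Real.pi * hbar)⁻¹ * p) := by
      simp only [RCLike.inner_apply, conj_trivial]; ring
    rw [hinner]
    congr 1
    have harg : -2 * Real.pi * (x * (-(2 * Real.pi * hbar)⁻¹ * p)) = p * x / hbar := by
      field_simp
    rw [harg]
    push_cast
    field_simp
  -- Fourier transform of h is Schwartz, hence integrable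
  set F : SchwartzMap ℝ ℂ := SchwartzMap.fourierTransformCLM ℝ h with hF
  have hFeq : ⇑F = 𝓕 (⇑h) := by
    rw [hF]; exact SchwartzMap.fourier_coe h
  have hR : (-(2 * Real.pi * hbar)⁻¹ : ℝ) ≠ 0 := by
    simp only [ne_eq, neg_eq_zero, inv_eq_zero]
    positivity
  have hFint : Integrable (⇑F) volume := F.integrable
  have hint : Integrable (fun p : ℝ => 𝓕 (⇑h) (-(2 * Real.pi * hbar)⁻¹ * p)) volume := by
    rw [← hFeq]
    exact hFint.comp_mul_left' hR
  have hintW : Integrable (fun p : ℝ => wigner hbar (fun x => ψ x) q p) volume := by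
    have := (hint.const_mul (((2 * Real.pi * hbar : ℝ) : ℂ)⁻¹))
    refine this.congr (Filter.Eventually.of_forall fun p => ?_)
    exact (key p).symm
  refine ⟨hintW, ?_⟩
  -- compute the integral
  calc ∫ p : ℝ, wigner hbar (fun x => ψ x) q p
      = ∫ p : ℝ, ((2 * Real.pi * hbar : ℝ) : ℂ)⁻¹ * 𝓕 (⇑h) (-(2 * Real.pi * hbar)⁻¹ * p) := by
        exact integral_congr_ae (Filter.Eventually.of_forall fun p => key p)
    _ = ((2 * Real.pi * hbar : ℝ) : ℂ)⁻¹ * ∫ p : ℝ, 𝓕 (⇑h) (-(2 * Real.pi * hbar)⁻¹ * p) := by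
        rw [integral_const_mul]
    _ = ((2 * Real.pi * hbar : ℝ) : ℂ)⁻¹ *
          (|(-(2 * Real.pi * hbar)⁻¹ : ℝ)⁻¹| • ∫ ξ : ℝ, 𝓕 (⇑h) ξ) := by
        rw [MeasureTheory.Measure.integral_comp_mul_left (fun ξ => 𝓕 (⇑h) ξ)]
    _ = ∫ ξ : ℝ, 𝓕 (⇑h) ξ := by
        have habs : |(-(2 * Real.pi * hbar)⁻¹ : ℝ)⁻¹| = 2 * Real.pi * hbar := by
          rw [inv_neg, inv_inv, abs_neg, abs_of_pos (by positivity)]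
        have hne : ((2 * Real.pi * hbar : ℝ) : ℂ) ≠ 0 := by
          simp only [ne_eq, Complex.ofReal_eq_zero]
          positivity
        rw [habs, Complex.real_smul, ← mul_assoc, inv_mul_cancel₀ hne, one_mul]
    _ = 𝓕⁻ (𝓕 (⇑h)) 0 := by
        rw [Real.fourierInv_eq]
        refine (integral_congr_ae (Filter.Eventually.of_forall fun ξ => ?_)).symm
        simp
    _ = h 0 := by
        rw [Continuous.fourierInv_fourier_eq h.continuous h.integrable (by rw [← hFeq]; exact hFint)]
    _ = ((‖ψ q‖) ^ 2 : ℝ) := by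
        rw [hfun 0]
        have : q - 0 / 2 = q := by ring
        rw [this, show q + 0 / 2 = q by ring]
        rw [Complex.mul_conj]
        simp [Complex.sq_norm]
end
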